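/- Let (u,v,w) be a degree-(m+2) codifferential with v = (0,0) and u ≠ (0,0). Then there exists a unique k ∈ K with w = k·(a₂, −a₁), and (u,v,w) is equivalent to d_k = ((0,1),(0,0),(k,0)). -/

import Mathlib

namespace LinfClassification

variable {K : Type*} [Field K] [CharZero K]

/-- A degree-(m+2) structure `((a₁,a₂),(a₃,a₄),(a₅,a₆))` on the 1|2-dimensional
graded space, encoding the odd coderivation
`d = a₁ψ^{1,0,m+1}_3 + a₂ψ^{0,1,m+1}_3 + a₃ψ^{0,0,m+2}_1 + a₄ψ^{0,0,m+2}_2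
 + a₅ψ^{1,1,m}_1 + a₆ψ^{1,1,m}_2`. -/
abbrev Str (K : Type*) := (K × K) × (K × K) × (K × K)

/-- The six codifferential equations expressing `[d,d] = 0`. -/
def IsCodiff (m : ℕ) (d : Str K) : Prop :=
  d.1.1 * d.2.2.1 + d.1.2 * d.2.2.2 = 0 ∧
  d.1.1 * d.2.1.1 + d.1.2 * d.2.1.2 = 0 ∧
  d.2.1.1 * (d.2.2.1 + ((m : K) + 2) * d.1.2) = 0 ∧
  d.2.1.2 * (d.2.2.1 + ((m : K) + 2) * d.1.2) = 0 ∧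
  d.2.1.1 * (d.2.2.2 - ((m : K) + 2) * d.1.1) = 0 ∧
  d.2.1.2 * (d.2.2.2 - ((m : K) + 2) * d.1.1) = 0

/-- Action of `(g, q) ∈ GL₂(K) × Kˣ` with `g = [[p, q'], [r, s]]`
(`det g = p·s - q'·r ≠ 0`) and scalar `t ≠ 0` on a degree-(m+2) structure:
`(g,t)·(u,v,w) = (tᵐ·(u g), t^{m+2}·g⁻¹ v, det(g)·tᵐ·g⁻¹ w)`,
`u` a row vector and `v, w` column vectors. -/
def act (m : ℕ) (p q r s t : K) (d : Str K) : Str K :=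
  ((t ^ m * (d.1.1 * p + d.1.2 * r), t ^ m * (d.1.1 * q + d.1.2 * s)),
   (t ^ (m + 2) * (p * s - q * r)⁻¹ * (s * d.2.1.1 - q * d.2.1.2),
    t ^ (m + 2) * (p * s - q * r)⁻¹ * (-r * d.2.1.1 + p * d.2.1.2)),
   (t ^ m * (s * d.2.2.1 - q * d.2.2.2),
    t ^ m * (-r * d.2.2.1 + p * d.2.2.2)))

/-- Linear equivalence: two degree-(m+2) structures lie in the same orbit. -/
def Equiv' (m : ℕ) (d d' : Str K) : Prop :=
  ∃ p q r s t : K, p * s - q * r ≠ 0 ∧ t ≠ 0 ∧ act m p q r s t d = d'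

/-- The normal form `d_∞ = ψ^{1,1,m}_1`. -/
def dInf : Str K := ((0, 0), (0, 0), (1, 0))

/-- The normal form `d_λ = ψ^{0,1,m+1}_3 + λψ^{1,1,m}_1`. -/
def dLam (lam : K) : Str K := ((0, 1), (0, 0), (lam, 0))

/-- The normal form `d_* = ψ^{0,0,m+2}_1`. -/
def dStar : Str K := ((0, 0), (1, 0), (0, 0))

/-- The normal form `d_# = ψ^{0,1,m+1}_3 + ψ^{0,0,m+2}_1 - (m+2)ψ^{1,1,m}_1`. -/
def dSharp (m : ℕ) : Str K := ((0, 1), (1, 0), (-((m : K) + 2), 0))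

/-- For a degree-(m+2) codifferential with `v = (0,0)` and `u ≠ (0,0)`, there is a
unique `k ∈ K` with `w = k·(a₂, -a₁)`, and the structure is equivalent to `d_k`. -/
theorem equiv_dLam (m : ℕ) (d : Str K) (hd : IsCodiff m d)
    (hv : d.2.1 = (0, 0)) (hu : d.1 ≠ (0, 0)) :
    (∃! k : K, d.2.2 = (k * d.1.2, -(k * d.1.1))) ∧
    (∀ k : K, d.2.2 = (k * d.1.2, -(k * d.1.1)) → Equiv' m d (dLam k)) := by
  obtain ⟨⟨a1, a2⟩, ⟨b1, b2⟩, ⟨a5, a6⟩⟩ := d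
  simp only [Prod.mk.injEq] at hv
  obtain ⟨rfl, rfl⟩ := hv
  dsimp only at hu ⊢
  have h0 : a1 * a5 + a2 * a6 = 0 := hd.1
  constructor
  · by_cases h2 : a2 = 0
    · have h1 : a1 ≠ 0 := fun h => hu (by simp [h, h2])
      have h5 : a5 = 0 := by
        have : a1 * a5 = 0 := by linear_combination h0 - a6 * h2
        exact (mul_eq_zero.mp this).resolve_left h1
      refine ⟨-(a6 * a1⁻¹), ?_, ?_⟩
      · simp only [Prod.mk.injEq, h2, h5, mul_zero]
        refine ⟨trivial, ?_⟩
        field_simp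
      · intro y hy
        rw [Prod.mk.injEq] at hy
        have := hy.2
        field_simp
        linear_combination this
    · refine ⟨a5 * a2⁻¹, ?_, ?_⟩
      · show (a5, a6) = (a5 * a2⁻¹ * a2, -(a5 * a2⁻¹ * a1))
        rw [Prod.mk.injEq]
        constructor
        · field_simp
        · field_simp
          linear_combination h0
      · intro y hy
        rw [Prod.mk.injEq] at hy
        have := hy.1
        field_simp
        linear_combination -this
  · intro k hk
    rw [Prod.mk.injEq] at hk
    obtain ⟨h5, h6⟩ := hk
    by_cases h2 : a2 = 0
    · have h1 : a1 ≠ 0 := fun h => hu (by simp [h, h2])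
      refine ⟨0, a1⁻¹, 1, 0, 1, ?_, one_ne_zero, ?_⟩
      · simpa using inv_ne_zero h1
      · simp only [act, dLam, one_pow, one_mul, Prod.mk.injEq]
        refine ⟨⟨by ring_nf; simp [h2], by field_simp; ring⟩, ⟨by ring, by ring⟩, ?_, ?_⟩
        · rw [h6]; field_simp; ring
        · rw [h5, h2]; ring
    · refine ⟨1, 0, -(a1 * a2⁻¹), a2⁻¹, 1, ?_, one_ne_zero, ?_⟩
      · simpa using inv_ne_zero h2
      · simp only [act, dLam, one_pow, one_mul, Prod.mk.injEq]
        refine ⟨⟨by field_simp; ring, by field_simp; ring⟩, ⟨by ring, by ring⟩, ?_, ?_⟩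
        · rw [h5]; field_simp; ring
        · rw [h5, h6]; field_simp; ring

end LinfClassification
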